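/- Let M ∈ ℝ^{m×m} be a symmetric positive semidefinite matrix with Mλ* = 0 for some λ* ∈ Δ^m, and suppose α₂ > 0 satisfies vᵀMv ≥ α₂‖v‖² for every v ∈ ℝ^m orthogonal to λ*. Let (Ω, 𝔽, P) be a probability space, let M̂ : Ω → ℝ^{m×m} be a measurable map taking values in symmetric positive semidefinite matrices with E(|M_{ij} − M̂_{ij}|) ≤ Q for all 1 ≤ i,j ≤ m, and let λ̂ : Ω → Δ^m be measurable with λ̂(ω)ᵀ M̂(ω) λ̂(ω) ≤ λᵀ M̂(ω) λ for every λ ∈ Δ^m and every ω ∈ Ω. Then E(‖λ̂ − λ*‖²₂) ≤ 8·m³·Q/α₂. -/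

import Mathlib

open MeasureTheory Matrix

set_option maxHeartbeats 1000000

/-- Expected coefficient-recovery bound: if `M` is PSD with kernel spanned by
`λ* ∈ Δ^m` and spectral gap `α₂`, `M̂` is a random PSD matrix whose entries
approximate those of `M` in expectation within `Q`, and `λ̂(ω)` minimizes the
quadratic form of `M̂(ω)` over the simplex, then `E‖λ̂ − λ*‖² ≤ 8 m³ Q / α₂`. -/
theorem expected_coefficient_recovery_bound
    {m : ℕ}
    (M : Matrix (Fin m) (Fin m) ℝ) (hMsymm : M.IsSymm) (hMpsd : M.PosSemidef)
    (lamStar : Fin m → ℝ) (hstar0 : ∀ j, 0 ≤ lamStar j) (hstar1 : ∑ j, lamStar j = 1)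
    (hker : M.mulVec lamStar = 0)
    (α₂ : ℝ) (hα : 0 < α₂)
    (hgap : ∀ v : Fin m → ℝ, v ⬝ᵥ lamStar = 0 →
      α₂ * ∑ i, v i ^ 2 ≤ v ⬝ᵥ M.mulVec v)
    {W : Type*} [MeasurableSpace W] (P : Measure W) [IsProbabilityMeasure P]
    (Mhat : W → Matrix (Fin m) (Fin m) ℝ)
    (hMhatMeas : ∀ i j, Measurable (fun ω => Mhat ω i j))
    (hMhatSymm : ∀ ω, (Mhat ω).IsSymm) (hMhatPsd : ∀ ω, (Mhat ω).PosSemidef)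
    (Q : ℝ)
    (hQint : ∀ i j, Integrable (fun ω => |M i j - Mhat ω i j|) P)
    (hQ : ∀ i j, ∫ ω, |M i j - Mhat ω i j| ∂P ≤ Q)
    (lamHat : W → Fin m → ℝ) (hlamHatMeas : ∀ j, Measurable (fun ω => lamHat ω j))
    (hlamHat0 : ∀ ω j, 0 ≤ lamHat ω j) (hlamHat1 : ∀ ω, ∑ j, lamHat ω j = 1)
    (hmin : ∀ ω, ∀ lam : Fin m → ℝ, (∀ j, 0 ≤ lam j) → ∑ j, lam j = 1 →
      lamHat ω ⬝ᵥ (Mhat ω).mulVec (lamHat ω) ≤ lam ⬝ᵥ (Mhat ω).mulVec lam) :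
    ∫ ω, ∑ i, (lamHat ω i - lamStar i) ^ 2 ∂P ≤ 8 * m ^ 3 * Q / α₂ := by
  rcases Nat.eq_zero_or_pos m with hm | hm
  · subst hm; simp at hstar1
  have hQ0 : 0 ≤ Q :=
    le_trans (integral_nonneg fun ω => abs_nonneg _) (hQ ⟨0, hm⟩ ⟨0, hm⟩)
  set S : W → ℝ := fun ω => ∑ i, ∑ j, |M i j - Mhat ω i j| with hSdef
  -- entrywise bound on quadratic forms over the simplex
  have stepA : ∀ ω, ∀ μ : Fin m → ℝ, (∀ j, 0 ≤ μ j) → ∑ j, μ j = 1 →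
      |μ ⬝ᵥ (M - Mhat ω).mulVec μ| ≤ S ω := by
    intro ω μ hμ0 hμ1
    have hμle1 : ∀ j, μ j ≤ 1 := by
      intro j
      calc μ j ≤ ∑ j, μ j := Finset.single_le_sum (fun i _ => hμ0 i) (Finset.mem_univ j)
        _ = 1 := hμ1
    have hquad : μ ⬝ᵥ (M - Mhat ω).mulVec μ
        = ∑ i, ∑ j, μ i * (((M - Mhat ω) i j) * μ j) := by
      simp [dotProduct, Matrix.mulVec, Finset.mul_sum]
    rw [hquad]
    calc |∑ i, ∑ j, μ i * (((M - Mhat ω) i j) * μ j)|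
        ≤ ∑ i, |∑ j, μ i * (((M - Mhat ω) i j) * μ j)| := Finset.abs_sum_le_sum_abs _ _
      _ ≤ ∑ i, ∑ j, |μ i * (((M - Mhat ω) i j) * μ j)| :=
          Finset.sum_le_sum fun i _ => Finset.abs_sum_le_sum_abs _ _
      _ ≤ S ω := by
          refine Finset.sum_le_sum fun i _ => Finset.sum_le_sum fun j _ => ?_
          have hij : (M - Mhat ω) i j = M i j - Mhat ω i j := rfl
          rw [abs_mul, abs_mul, abs_of_nonneg (hμ0 i), abs_of_nonneg (hμ0 j), hij]
          have hd : (0:ℝ) ≤ |M i j - Mhat ω i j| := abs_nonneg _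
          have hμμ : μ i * μ j ≤ 1 := mul_le_one₀ (hμle1 i) (hμ0 j) (hμle1 j)
          calc μ i * (|M i j - Mhat ω i j| * μ j)
              = (μ i * μ j) * |M i j - Mhat ω i j| := by ring
            _ ≤ 1 * |M i j - Mhat ω i j| := mul_le_mul_of_nonneg_right hμμ hd
            _ = |M i j - Mhat ω i j| := one_mul _
  -- key pointwise bound
  have key : ∀ ω, ∑ i, (lamHat ω i - lamStar i) ^ 2 ≤ 4 * m / α₂ * S ω := by
    intro ω
    set μ : Fin m → ℝ := lamHat ω with hμdef
    set v : Fin m → ℝ := μ - lamStar with hvdef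
    have hvapp : ∀ i, v i = μ i - lamStar i := fun i => rfl
    have hsum_v : ∑ i, v i = 0 := by
      simp only [hvapp, Finset.sum_sub_distrib, hlamHat1 ω, hstar1, sub_self, hμdef]
    have hMstar : ∀ u : Fin m → ℝ, lamStar ⬝ᵥ M.mulVec u = 0 := by
      intro u
      rw [Matrix.dotProduct_mulVec, ← Matrix.mulVec_transpose, hMsymm.eq, hker]
      simp
    -- v M v = μ M μ
    have hvMv : v ⬝ᵥ M.mulVec v = μ ⬝ᵥ M.mulVec μ := by
      have h1 : M.mulVec v = M.mulVec μ := by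
        rw [hvdef, Matrix.mulVec_sub, hker, sub_zero]
      rw [h1, hvdef, sub_dotProduct, hMstar μ, sub_zero]
    -- μ M μ ≤ 2 S ω
    have hμMμ : μ ⬝ᵥ M.mulVec μ ≤ 2 * S ω := by
      have e1 : μ ⬝ᵥ M.mulVec μ
          = μ ⬝ᵥ (Mhat ω).mulVec μ + μ ⬝ᵥ (M - Mhat ω).mulVec μ := by
        rw [Matrix.sub_mulVec, dotProduct_sub]; ring
      have e2 : lamStar ⬝ᵥ (Mhat ω).mulVec lamStar
          = lamStar ⬝ᵥ M.mulVec lamStar - lamStar ⬝ᵥ (M - Mhat ω).mulVec lamStar := by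
        rw [Matrix.sub_mulVec, dotProduct_sub]; ring
      have h3 := hmin ω lamStar hstar0 hstar1
      have h4 := (abs_le.mp (stepA ω μ (hlamHat0 ω) (hlamHat1 ω))).2
      have h5 := (abs_le.mp (stepA ω lamStar hstar0 hstar1)).1
      have h6 := hMstar lamStar
      rw [← hμdef] at h3
      linarith
    -- decomposition of v orthogonal to lamStar
    have tpos : 0 < ∑ i, lamStar i ^ 2 := by
      have : ∃ i, lamStar i ≠ 0 := by
        by_contra h; push_neg at h; simp [h] at hstar1
      obtain ⟨i, hi⟩ := this
      exact Finset.sum_pos' (fun j _ => sq_nonneg _) ⟨i, Finset.mem_univ i, by positivity⟩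
    set t : ℝ := ∑ i, lamStar i ^ 2 with htdef
    set c : ℝ := (∑ i, v i * lamStar i) / t with hcdef
    set w : Fin m → ℝ := v - c • lamStar with hwdef
    have hwapp : ∀ i, w i = v i - c * lamStar i := fun i => rfl
    have hwstar : w ⬝ᵥ lamStar = 0 := by
      have : w ⬝ᵥ lamStar = (∑ i, v i * lamStar i) - c * t := by
        simp only [dotProduct, hwapp, sub_mul, Finset.sum_sub_distrib, htdef,
          Finset.mul_sum, sq]
        ring_nf
      rw [this, hcdef]
      field_simp
      ring
    have hgapw := hgap w hwstar
    -- w M w = v M v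
    have hwMw : w ⬝ᵥ M.mulVec w = v ⬝ᵥ M.mulVec v := by
      have h1 : M.mulVec w = M.mulVec v := by
        rw [hwdef, Matrix.mulVec_sub, Matrix.mulVec_smul, hker, smul_zero, sub_zero]
      rw [h1, hwdef, sub_dotProduct, smul_dotProduct, hMstar v, smul_zero,
        sub_zero]
    -- sum decomposition
    have hw0 : ∑ i, w i * lamStar i = 0 := hwstar
    have hdecomp : ∑ i, v i ^ 2 = ∑ i, w i ^ 2 + c ^ 2 * t := by
      have h : ∀ i, v i ^ 2 = w i ^ 2 + 2 * c * (w i * lamStar i) + c ^ 2 * lamStar i ^ 2 := by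
        intro i; rw [hwapp]; ring
      rw [Finset.sum_congr rfl fun i _ => h i, Finset.sum_add_distrib, Finset.sum_add_distrib,
        ← Finset.mul_sum, ← Finset.mul_sum, hw0, htdef]
      ring
    have hc : c = - ∑ i, w i := by
      have h : ∑ i, w i = ∑ i, v i - c * ∑ i, lamStar i := by
        simp only [hwapp, Finset.sum_sub_distrib, Finset.mul_sum]
      rw [hstar1, hsum_v] at h
      linarith
    have hc2 : c ^ 2 ≤ m * ∑ i, w i ^ 2 := by
      rw [hc, neg_sq]
      calc (∑ i, w i) ^ 2 = (∑ i, w i * 1) ^ 2 := by simp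
        _ ≤ (∑ i, w i ^ 2) * ∑ _i : Fin m, (1:ℝ) ^ 2 := Finset.sum_mul_sq_le_sq_mul_sq _ _ _
        _ = m * ∑ i, w i ^ 2 := by simp [mul_comm]
    have ht1 : t ≤ 1 := by
      rw [htdef]
      calc ∑ i, lamStar i ^ 2 ≤ ∑ i, lamStar i := by
            refine Finset.sum_le_sum fun i _ => ?_
            have h1 : lamStar i ≤ 1 := by
              calc lamStar i ≤ ∑ j, lamStar j :=
                    Finset.single_le_sum (fun j _ => hstar0 j) (Finset.mem_univ i)
                _ = 1 := hstar1
            nlinarith [hstar0 i]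
        _ = 1 := hstar1
    have hwsq_nonneg : (0:ℝ) ≤ ∑ i, w i ^ 2 := Finset.sum_nonneg fun i _ => sq_nonneg _
    have hαw : α₂ * ∑ i, w i ^ 2 ≤ 2 * S ω := by
      rw [hwMw, hvMv] at hgapw; linarith
    have hm1 : (1:ℝ) ≤ m := by exact_mod_cast hm
    have hvsq : ∑ i, v i ^ 2 ≤ 2 * m * ∑ i, w i ^ 2 := by
      have hct : c ^ 2 * t ≤ m * ∑ i, w i ^ 2 := by
        nlinarith [sq_nonneg c, tpos.le]
      rw [hdecomp]; nlinarith
    have hfinal : α₂ * ∑ i, v i ^ 2 ≤ 4 * m * S ω := by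
      have h1 : α₂ * (2 * m * ∑ i, w i ^ 2) ≤ 2 * m * (2 * S ω) := by
        have := mul_le_mul_of_nonneg_left hαw (by positivity : (0:ℝ) ≤ 2 * m)
        nlinarith
      have h2 : α₂ * ∑ i, v i ^ 2 ≤ α₂ * (2 * m * ∑ i, w i ^ 2) :=
        mul_le_mul_of_nonneg_left hvsq hα.le
      linarith
    have hgoal : ∑ i, (lamHat ω i - lamStar i) ^ 2 = ∑ i, v i ^ 2 := by
      refine Finset.sum_congr rfl fun i _ => ?_
      rw [hvapp, hμdef]
    rw [hgoal, div_mul_eq_mul_div, le_div_iff₀ hα]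
    linarith [hfinal]
  -- integration
  have hSint : Integrable S P :=
    integrable_finset_sum _ fun i _ => integrable_finset_sum _ fun j _ => hQint i j
  have hg_int : Integrable (fun ω => 4 * m / α₂ * S ω) P := hSint.const_mul _
  have hf_meas : AEStronglyMeasurable (fun ω => ∑ i, (lamHat ω i - lamStar i) ^ 2) P := by
    refine Measurable.aestronglyMeasurable ?_
    exact Finset.measurable_sum _ fun i _ => ((hlamHatMeas i).sub measurable_const).pow_const 2
  have hf_int : Integrable (fun ω => ∑ i, (lamHat ω i - lamStar i) ^ 2) P := by
    refine hg_int.mono' hf_meas (Filter.Eventually.of_forall fun ω => ?_)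
    rw [Real.norm_eq_abs, abs_of_nonneg (Finset.sum_nonneg fun i _ => sq_nonneg _)]
    exact key ω
  have hSbound : ∫ ω, S ω ∂P ≤ m ^ 2 * Q := by
    rw [hSdef]
    rw [integral_finset_sum _ fun i _ => integrable_finset_sum _ fun j _ => hQint i j]
    calc ∑ i, ∫ ω, ∑ j, |M i j - Mhat ω i j| ∂P
        = ∑ i : Fin m, ∑ j : Fin m, ∫ ω, |M i j - Mhat ω i j| ∂P := by
          refine Finset.sum_congr rfl fun i _ => ?_
          exact integral_finset_sum _ fun j _ => hQint i j
      _ ≤ ∑ _i : Fin m, ∑ _j : Fin m, Q :=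
          Finset.sum_le_sum fun i _ => Finset.sum_le_sum fun j _ => hQ i j
      _ = m ^ 2 * Q := by simp [sq]; ring
  calc ∫ ω, ∑ i, (lamHat ω i - lamStar i) ^ 2 ∂P
      ≤ ∫ ω, 4 * m / α₂ * S ω ∂P := integral_mono hf_int hg_int key
    _ = 4 * m / α₂ * ∫ ω, S ω ∂P := integral_const_mul _ _
    _ ≤ 4 * m / α₂ * (m ^ 2 * Q) := by
        refine mul_le_mul_of_nonneg_left hSbound ?_
        exact div_nonneg (by positivity) hα.le
    _ ≤ 8 * m ^ 3 * Q / α₂ := by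
        rw [div_mul_eq_mul_div, div_le_div_iff₀ hα hα]
        have hm0 : (0:ℝ) ≤ (m:ℝ) ^ 3 * Q * α₂ := by positivity
        nlinarith [hm0]
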